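/- Gerstenhaber's algorithm applied to an upper order ideal I of the type A_n root poset produces characteristic sequences S_1, S_2, ... of weakly decreasing lengths, so that λ_I := (|S_1|, |S_2|, ...) is a partition of n+1. -/

import Mathlib

/-- An upper order ideal of matrix positions: `I ⊆ {(i,j) : 1 ≤ i < j ≤ n+1}` with
`(i,j) ∈ I`, `i' ≤ i`, `j ≤ j'`, `i' < j'` implying `(i',j') ∈ I`. -/
def IsMatrixIdeal (n : ℕ) (I : Finset (ℕ × ℕ)) : Prop :=
  (∀ p ∈ I, 1 ≤ p.1 ∧ p.1 < p.2 ∧ p.2 ≤ n + 1) ∧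
  (∀ p ∈ I, ∀ q : ℕ × ℕ, 1 ≤ q.1 → q.1 ≤ p.1 → p.2 ≤ q.2 → q.2 ≤ n + 1 → q ∈ I)

/-- `s` is a (greedy) characteristic sequence for the ideal `I` on the set `R` of
still-available indices: it starts at the smallest element of `R`; each element `i`
is followed by the smallest available `j` with `(i,j) ∈ I`; and it stops when no
such `j` exists. -/
def IsCharSeq (I : Finset (ℕ × ℕ)) (R : Finset ℕ) (s : List ℕ) : Prop :=
  (∃ h : s ≠ [], (s.head h ∈ R ∧ ∀ m ∈ R, s.head h ≤ m) ∧
    ∀ j ∈ R, (s.getLast h, j) ∉ I) ∧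
  s.Chain' (fun i j => j ∈ R ∧ (i, j) ∈ I ∧ ∀ j' ∈ R, (i, j') ∈ I → j ≤ j')

/-- `L` is the list of characteristic sequences produced by Gerstenhaber's algorithm
on the ideal `I`: starting with all of `{1, …, n+1}` available, each sequence is the
greedy characteristic sequence on the remaining indices, which are then removed,
until no index remains. -/
def IsCharSeqList (n : ℕ) (I : Finset (ℕ × ℕ)) (L : List (List ℕ)) : Prop :=
  ∃ R : ℕ → Finset ℕ, R 0 = Finset.Icc 1 (n + 1) ∧ R L.length = ∅ ∧
    ∀ k < L.length, IsCharSeq I (R k) (L.getD k []) ∧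
      R (k + 1) = R k \ (L.getD k []).toFinset

/-- Every element of a characteristic sequence lies in `R`. -/
lemma charSeq_mem {I : Finset (ℕ × ℕ)} {R : Finset ℕ} {s : List ℕ}
    (hs : IsCharSeq I R s) : ∀ t (ht : t < s.length), s.get ⟨t, ht⟩ ∈ R := by
  obtain ⟨⟨hne, ⟨hhead, _⟩, _⟩, hchain⟩ := hs
  intro t ht
  cases t with
  | zero =>
    have := List.head_eq_getElem hne
    simpa [List.get_eq_getElem, ← this] using hhead
  | succ t =>
    have hch := List.isChain_iff_getElem.1 hchain t (by omega)
    exact hch.1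

/-- The key comparison lemma: Gerstenhaber's greedy sequence on a subset is no
longer than the one on the whole set. -/
lemma charSeq_length_le {n : ℕ} {I : Finset (ℕ × ℕ)} (hI : IsMatrixIdeal n I)
    {R R' : Finset ℕ} (hR1 : ∀ m ∈ R, 1 ≤ m) (hsub : R' ⊆ R)
    {s s' : List ℕ} (hs : IsCharSeq I R s) (hs' : IsCharSeq I R' s') :
    s'.length ≤ s.length := by
  obtain ⟨⟨hne, ⟨hhead, hmin⟩, hlast⟩, hchain⟩ := hs
  obtain ⟨⟨hne', ⟨hhead', _⟩, _⟩, hchain'⟩ := hs'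
  have main : ∀ t (ht : t < s'.length), ∃ ht2 : t < s.length,
      s.get ⟨t, ht2⟩ ≤ s'.get ⟨t, ht⟩ := by
    intro t
    induction t with
    | zero =>
      intro ht
      refine ⟨List.length_pos_iff.2 hne, ?_⟩
      have h1 := List.head_eq_getElem hne
      have h2 := List.head_eq_getElem hne'
      have := hmin _ (hsub hhead')
      simp only [List.get_eq_getElem, ← h1, ← h2]
      exact this
    | succ t ih =>
      intro ht
      obtain ⟨ht2, hle⟩ := ih (by omega)
      have hch' := List.isChain_iff_getElem.1 hchain' t (by omega)
      obtain ⟨hmemR', hmemI, _⟩ := hch'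
      have hb := hI.1 _ hmemI
      have h1 : 1 ≤ s.get ⟨t, ht2⟩ := hR1 _ (charSeq_mem ⟨⟨hne, ⟨hhead, hmin⟩, hlast⟩, hchain⟩ t ht2)
      have hIq : (s.get ⟨t, ht2⟩, s'.get ⟨t + 1, ht⟩) ∈ I :=
        hI.2 _ hmemI _ h1 hle (le_refl _) hb.2.2
      have ht3 : t + 1 < s.length := by
        by_contra hcon
        have heq : s.length - 1 = t := by omega
        have hlg : s.getLast hne = s.get ⟨t, ht2⟩ := by
          simp only [List.getLast_eq_getElem, List.get_eq_getElem, heq]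
        exact hlast _ (hsub hmemR') (hlg ▸ hIq)
      refine ⟨ht3, ?_⟩
      have hch := List.isChain_iff_getElem.1 hchain t (by omega)
      exact hch.2.2 _ (hsub hmemR') hIq
  by_contra hcon
  push_neg at hcon
  obtain ⟨ht2, _⟩ := main s.length hcon
  omega

/-- A characteristic sequence is strictly increasing, hence has no duplicates. -/
lemma charSeq_nodup {n : ℕ} {I : Finset (ℕ × ℕ)} (hI : IsMatrixIdeal n I)
    {R : Finset ℕ} {s : List ℕ} (hs : IsCharSeq I R s) : s.Nodup := by
  have : s.Chain' (· < ·) := hs.2.imp (fun a b h => (hI.1 _ h.2.1).2.1)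
  exact (List.isChain_iff_pairwise.1 this).nodup

lemma charSeq_subset {I : Finset (ℕ × ℕ)} {R : Finset ℕ} {s : List ℕ}
    (hs : IsCharSeq I R s) : s.toFinset ⊆ R := by
  intro x hx
  rw [List.mem_toFinset] at hx
  obtain ⟨t, ht, rfl⟩ := List.mem_iff_get.1 hx
  exact charSeq_mem hs _ _

/-- Gerstenhaber's algorithm applied to an upper order ideal `I`
produces characteristic sequences `S_1, S_2, …` of weakly decreasing lengths, so
that `λ_I := (|S_1|, |S_2|, …)` is a partition of `n+1`. -/
theorem charSeq_lengths_form_partition (n : ℕ) (I : Finset (ℕ × ℕ))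
    (hI : IsMatrixIdeal n I) (L : List (List ℕ)) (hL : IsCharSeqList n I L) :
    (L.map List.length).Chain' (fun a b => b ≤ a) ∧
    (L.map List.length).sum = n + 1 := by
  obtain ⟨R, hR0, hRend, hRk⟩ := hL
  -- R is decreasing, so all R k ⊆ Icc 1 (n+1)
  have hsubIcc : ∀ k ≤ L.length, R k ⊆ Finset.Icc 1 (n + 1) := by
    intro k
    induction k with
    | zero => intro _; rw [hR0]
    | succ k ih =>
      intro hk
      have h2 := (hRk k (by omega)).2
      rw [h2]
      exact (Finset.sdiff_subset).trans (ih (by omega))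
  constructor
  · rw [List.Chain', List.isChain_map, List.isChain_iff_getElem]
    intro i hi
    have h1 := hRk i (by omega)
    have h2 := hRk (i + 1) (by omega)
    have hgd1 : L.getD i [] = L.get ⟨i, by omega⟩ := List.getD_eq_get _ _ ⟨i, by omega⟩
    have hgd2 : L.getD (i + 1) [] = L.get ⟨i + 1, by omega⟩ := List.getD_eq_get _ _ ⟨i + 1, by omega⟩
    have hsub : R (i + 1) ⊆ R i := h1.2 ▸ Finset.sdiff_subset
    have hR1 : ∀ m ∈ R i, 1 ≤ m := fun m hm => (Finset.mem_Icc.1 (hsubIcc i (by omega) hm)).1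
    have := charSeq_length_le hI hR1 hsub h1.1 h2.1
    rw [hgd1, hgd2] at this
    exact this
  · -- telescoping cardinality
    have key : ∀ k ≤ L.length, ((L.take k).map List.length).sum + (R k).card = n + 1 := by
      intro k
      induction k with
      | zero => intro _; simp [hR0]
      | succ k ih =>
        intro hk
        have hk' : k < L.length := by omega
        obtain ⟨hcs, hRsucc⟩ := hRk k hk'
        have hsub := charSeq_subset hcs
        have hnd := charSeq_nodup hI hcs
        have hcard : (R (k + 1)).card = (R k).card - (L.getD k []).length := by
          rw [hRsucc, Finset.card_sdiff_of_subset hsub, List.toFinset_card_of_nodup hnd]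
        have hle : (L.getD k []).length ≤ (R k).card := by
          rw [← List.toFinset_card_of_nodup hnd]
          exact Finset.card_le_card hsub
        have htake : ((L.take (k + 1)).map List.length).sum
            = ((L.take k).map List.length).sum + (L.getD k []).length := by
          rw [List.map_take, List.map_take, List.sum_take_succ (L.map List.length) k (by simpa using hk')]
          simp [List.getD_eq_getElem L [] hk', List.getElem?_eq_getElem hk']
        have := ih (by omega)
        omega
    have := key L.length (le_refl _)
    rw [List.take_length, hRend] at this
    simpa using this
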